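/- A function E : ℤ≥0 → [0,∞) is an e-value for ℳ (i.e. ∑_n E(n) f_P(n) ≤ 1 for every P ∈ ℳ) if and only if there exists a nondecreasing function ρ : ℤ≥0 → [0,∞) with ρ(0) = 0 and ρ(n) ≤ n for all n ∈ ℤ≥0, such that E(n) = ρ(n+1) − ρ(n) for all n ∈ ℤ≥0. -/

import Mathlib

open MeasureTheory ENNReal

/-- `ℳ`: monotone probability distributions on `ℤ≥0`. -/
def MonotoneClass : Set (Measure ℕ) :=
  {P | IsProbabilityMeasure P ∧ ∀ n : ℕ, P {n + 1} ≤ P {n}}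

lemma key_abel (ρ : ℕ → ℝ) (g : ℕ → ℝ) (hg0 : ∀ n, 0 ≤ g n)
    (hganti : ∀ n, g (n+1) ≤ g n) (hρ : ∀ n, ρ n ≤ n) (hρ0 : ρ 0 = 0) :
    ∀ N, (∑ n ∈ Finset.range N, (ρ (n+1) - ρ n) * g n) + ((N : ℝ) - ρ N) * g N
      ≤ ∑ n ∈ Finset.range N, g n := by
  intro N
  induction N with
  | zero => simp [hρ0]
  | succ N ih =>
    rw [Finset.sum_range_succ, Finset.sum_range_succ]
    have h1 : ((N:ℝ)+1 - ρ (N+1)) * g (N+1) ≤ ((N:ℝ)+1 - ρ (N+1)) * g N := by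
      apply mul_le_mul_of_nonneg_left (hganti N)
      have := hρ (N+1); push_cast at this; linarith
    push_cast
    linarith [ih, h1]

/-- **polar of `ℳ`.** A function `E : ℤ≥0 → [0,∞)` is an e-value for `ℳ`
iff there is a nondecreasing `ρ : ℤ≥0 → [0,∞)` with `ρ(0) = 0` and `ρ(n) ≤ n`, such that
`E(n) = ρ(n+1) − ρ(n)` for all `n`. -/
theorem stmt2 (E : ℕ → NNReal) :
    (∀ P ∈ MonotoneClass, ∑' n : ℕ, (E n : ℝ≥0∞) * P {n} ≤ 1) ↔
      ∃ ρ : ℕ → ℝ, (∀ n, 0 ≤ ρ n) ∧ Monotone ρ ∧ ρ 0 = 0 ∧ (∀ n : ℕ, ρ n ≤ n) ∧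
        ∀ n : ℕ, (E n : ℝ) = ρ (n + 1) - ρ n := by
  constructor
  · intro h
    refine ⟨fun n => ∑ k ∈ Finset.range n, (E k : ℝ), ?_, ?_, ?_, ?_,
      fun n => by simp [Finset.sum_range_succ]⟩
    · intro n; exact Finset.sum_nonneg fun k _ => (E k).coe_nonneg
    · apply monotone_nat_of_le_succ
      intro n
      rw [Finset.sum_range_succ]
      have := (E n).coe_nonneg
      linarith
    · simp
    · intro n
      match n with
      | 0 => simp
      | m + 1 =>
        -- use the uniform measure on {0, ..., m}
        set P : Measure ℕ := ((m+1 : ℝ≥0∞))⁻¹ • ∑ k ∈ Finset.range (m+1), Measure.dirac k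
          with hPdef
        have hm0 : ((m : ℝ≥0∞) + 1) ≠ 0 := by simp
        have hmtop : ((m : ℝ≥0∞) + 1) ≠ ⊤ := by simp
        have happ : ∀ n : ℕ, P {n} = if n < m+1 then ((m+1:ℝ≥0∞))⁻¹ else 0 := by
          intro n
          rw [hPdef, Measure.smul_apply, Measure.finset_sum_apply]
          simp only [Measure.dirac_apply' _ (measurableSet_singleton n), Set.indicator_apply,
            Set.mem_singleton_iff, Pi.one_apply]
          rw [Finset.sum_ite_eq' (Finset.range (m+1)) n (fun _ => 1)]
          simp [Finset.mem_range, mul_ite]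
        have hprob : IsProbabilityMeasure P := by
          constructor
          rw [hPdef, Measure.smul_apply, Measure.finset_sum_apply]
          simp only [measure_univ, smul_eq_mul]
          rw [Finset.sum_const, Finset.card_range, nsmul_eq_mul, mul_one]
          push_cast
          exact ENNReal.inv_mul_cancel hm0 hmtop
        have hmem : P ∈ MonotoneClass := by
          refine ⟨hprob, fun n => ?_⟩
          rw [happ, happ]
          split_ifs with h1 h2 h2
          · exact le_rfl
          · omega
          · exact zero_le
          · exact le_rfl
        have hle := h P hmem
        have hsum : ∑ n ∈ Finset.range (m+1), (E n : ℝ≥0∞) * P {n} ≤ 1 :=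
          le_trans (ENNReal.sum_le_tsum _) hle
        have heq : ∑ n ∈ Finset.range (m+1), (E n : ℝ≥0∞) * P {n}
            = (∑ n ∈ Finset.range (m+1), (E n : ℝ≥0∞)) * ((m+1:ℝ≥0∞))⁻¹ := by
          rw [Finset.sum_mul]
          apply Finset.sum_congr rfl
          intro n hn
          rw [happ n, if_pos (Finset.mem_range.mp hn)]
        rw [heq] at hsum
        have hS : (∑ n ∈ Finset.range (m+1), (E n : ℝ≥0∞)) ≤ (m+1 : ℝ≥0∞) := by
          have := mul_le_mul_left hsum ((m:ℝ≥0∞)+1)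
          rwa [mul_assoc, ENNReal.inv_mul_cancel hm0 hmtop, mul_one, one_mul] at this
        have hS' : ∑ n ∈ Finset.range (m+1), (E n : ℝ) ≤ (m:ℝ)+1 := by
          have hS2 : (∑ n ∈ Finset.range (m+1), E n : NNReal) ≤ (m+1 : NNReal) := by
            exact_mod_cast hS
          exact_mod_cast hS2
        show ∑ k ∈ Finset.range (m+1), (E k : ℝ) ≤ ((m+1 : ℕ) : ℝ)
        push_cast
        exact hS'
  · rintro ⟨ρ, hρ0, hρmono, hρzero, hρn, hE⟩ P hP
    haveI : IsProbabilityMeasure P := hP.1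
    set g : ℕ → ℝ := fun n => (P {n}).toReal with hg
    have hfin : ∀ n : ℕ, P {n} ≠ ⊤ := fun n => measure_ne_top P _
    have hg0 : ∀ n, 0 ≤ g n := fun n => ENNReal.toReal_nonneg
    have hganti : ∀ n, g (n+1) ≤ g n := fun n =>
      ENNReal.toReal_mono (hfin n) (hP.2 n)
    have hbound : ∀ N, ∑ n ∈ Finset.range N, (E n : ℝ≥0∞) * P {n} ≤ 1 := by
      intro N
      have hsg : ∑ n ∈ Finset.range N, g n ≤ 1 := by
        have h1 : ∑ n ∈ Finset.range N, P {n} = P (Finset.range N : Set ℕ) := by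
          rw [← measure_biUnion_finset]
          · congr 1; ext x; simp
          · intro i _ j _ hij
            simp [Function.onFun, Set.disjoint_singleton, hij]
          · intro i _; exact measurableSet_singleton i
        have h2 : P (Finset.range N : Set ℕ) ≤ 1 := prob_le_one
        have h3 : ∑ n ∈ Finset.range N, P {n} ≤ 1 := h1 ▸ h2
        calc ∑ n ∈ Finset.range N, g n
            = (∑ n ∈ Finset.range N, P {n}).toReal := by
              rw [ENNReal.toReal_sum (fun n _ => hfin n)]
          _ ≤ 1 := by
              have := ENNReal.toReal_mono one_ne_top h3
              simpa using this
      have hkey := key_abel ρ g hg0 hganti hρn hρzero N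
      have hnonneg : 0 ≤ ((N : ℝ) - ρ N) * g N :=
        mul_nonneg (by have := hρn N; linarith) (hg0 N)
      have hreal : ∑ n ∈ Finset.range N, (E n : ℝ) * g n ≤ 1 := by
        have : ∑ n ∈ Finset.range N, (E n : ℝ) * g n
            = ∑ n ∈ Finset.range N, (ρ (n+1) - ρ n) * g n := by
          apply Finset.sum_congr rfl; intro n _; rw [hE n]
        rw [this]; linarith
      have htoReal : (∑ n ∈ Finset.range N, (E n : ℝ≥0∞) * P {n}).toReal
          = ∑ n ∈ Finset.range N, (E n : ℝ) * g n := by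
        rw [ENNReal.toReal_sum]
        · apply Finset.sum_congr rfl
          intro n _
          rw [ENNReal.toReal_mul]
          simp [hg]
        · intro n _
          exact ENNReal.mul_ne_top ENNReal.coe_ne_top (hfin n)
      have hne : (∑ n ∈ Finset.range N, (E n : ℝ≥0∞) * P {n}) ≠ ⊤ := by
        rw [ENNReal.sum_ne_top]
        intro n _
        exact ENNReal.mul_ne_top ENNReal.coe_ne_top (hfin n)
      rw [← ENNReal.ofReal_toReal hne, htoReal, ← ENNReal.ofReal_one]
      exact ENNReal.ofReal_le_ofReal hreal
    rw [ENNReal.tsum_eq_iSup_sum]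
    apply iSup_le
    intro s
    obtain ⟨N, hN⟩ := s.exists_nat_subset_range
    calc ∑ n ∈ s, (E n : ℝ≥0∞) * P {n}
        ≤ ∑ n ∈ Finset.range N, (E n : ℝ≥0∞) * P {n} :=
          Finset.sum_le_sum_of_subset hN
      _ ≤ 1 := hbound N
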